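/- For integers 1 ≤ s ≤ n ≤ t - 1, one has ∑_{i=0}^{s} (-1)^i * (C(s,i) * C(t,i) / C(n,i)) = (-1)^s * C(s+t-n-1, s) / C(n, s). -/

import Mathlib

open Finset

private lemma alt_partial (t : ℕ) (ht : 1 ≤ t) : ∀ s : ℕ,
    ∑ i ∈ Finset.range (s + 1), (-1 : ℤ) ^ i * (t.choose i : ℤ)
      = (-1 : ℤ) ^ s * ((t - 1).choose s : ℤ) := by
  intro s
  induction s with
  | zero => simp
  | succ s ih =>
      rw [Finset.sum_range_succ, ih]
      obtain ⟨t', rfl⟩ : ∃ t', t = t' + 1 := ⟨t - 1, (Nat.succ_pred_eq_of_pos ht).symm⟩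
      rw [Nat.add_sub_cancel, Nat.choose_succ_succ' t' s]
      push_cast
      ring

private lemma aux_sum : ∀ s n t : ℕ, s ≤ n → n < t →
    ∑ i ∈ Finset.range (s + 1),
        (-1 : ℤ) ^ i * (t.choose i : ℤ) * ((n - i).choose (s - i) : ℤ)
      = (-1 : ℤ) ^ s * ((s + t - n - 1).choose s : ℤ) := by
  intro s
  induction s with
  | zero => intro n t _ _; simp
  | succ s ih =>
      intro n t hsn hnt
      induction n, hsn using Nat.le_induction with
      | base =>
          have h1 : ∀ i ∈ Finset.range (s + 1 + 1),
              (-1 : ℤ) ^ i * (t.choose i : ℤ) * (((s + 1) - i).choose ((s + 1) - i) : ℤ)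
                = (-1 : ℤ) ^ i * (t.choose i : ℤ) := by
            intro i _; rw [Nat.choose_self]; push_cast; ring
          rw [Finset.sum_congr rfl h1, alt_partial t (by omega)]
          have e : s + 1 + t - (s + 1) - 1 = t - 1 := by omega
          rw [e]
      | succ n hn ihn =>
          have hnt' : n < t := by omega
          have key : ∑ i ∈ Finset.range (s + 1 + 1),
              (-1 : ℤ) ^ i * (t.choose i : ℤ) * (((n + 1) - i).choose ((s + 1) - i) : ℤ)
              = (∑ i ∈ Finset.range (s + 1 + 1),
                  (-1 : ℤ) ^ i * (t.choose i : ℤ) * ((n - i).choose ((s + 1) - i) : ℤ))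
                + ∑ i ∈ Finset.range (s + 1),
                  (-1 : ℤ) ^ i * (t.choose i : ℤ) * ((n - i).choose (s - i) : ℤ) := by
            rw [Finset.sum_range_succ, Finset.sum_range_succ (n := s + 1)]
            have hlast : ((n + 1) - (s + 1)).choose ((s + 1) - (s + 1)) = 1 := by
              simp
            have hlast2 : (n - (s + 1)).choose ((s + 1) - (s + 1)) = 1 := by
              simp
            rw [hlast, hlast2]
            have h2 : ∀ i ∈ Finset.range (s + 1),
                (-1 : ℤ) ^ i * (t.choose i : ℤ) * (((n + 1) - i).choose ((s + 1) - i) : ℤ)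
                = (-1 : ℤ) ^ i * (t.choose i : ℤ) * ((n - i).choose ((s + 1) - i) : ℤ)
                  + (-1 : ℤ) ^ i * (t.choose i : ℤ) * ((n - i).choose (s - i) : ℤ) := by
              intro i hi
              rw [Finset.mem_range] at hi
              have e1 : (n + 1) - i = (n - i) + 1 := by omega
              have e2 : (s + 1) - i = (s - i) + 1 := by omega
              rw [e1, e2, Nat.choose_succ_succ]
              push_cast
              ring
            rw [Finset.sum_congr rfl h2, Finset.sum_add_distrib]
            ring
          rw [key, ihn (by omega), ih n t (by omega) hnt']
          have e3 : s + 1 + t - n - 1 = (s + 1 + t - (n + 1) - 1) + 1 := by omega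
          have e4 : s + t - n - 1 = s + 1 + t - (n + 1) - 1 := by omega
          rw [e3, e4, Nat.choose_succ_succ]
          push_cast
          ring

theorem gauss_case_three (s t n : ℕ) (hs : 1 ≤ s) (hsn : s ≤ n) (hnt : n ≤ t - 1) :
    ∑ i ∈ Finset.range (s + 1),
        (-1 : ℚ) ^ i * ((s.choose i : ℚ) * (t.choose i) / (n.choose i))
      = (-1 : ℚ) ^ s * ((s + t - n - 1).choose s : ℚ) / (n.choose s) := by
  have ht : n < t := by omega
  have hns : (0 : ℚ) < (n.choose s : ℚ) := by
    exact_mod_cast Nat.choose_pos hsn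
  have hterm : ∀ i ∈ Finset.range (s + 1),
      (-1 : ℚ) ^ i * ((s.choose i : ℚ) * (t.choose i) / (n.choose i))
        = (-1 : ℚ) ^ i * (t.choose i : ℚ) * ((n - i).choose (s - i) : ℚ) / (n.choose s) := by
    intro i hi
    rw [Finset.mem_range] at hi
    have his : i ≤ s := by omega
    have hin : i ≤ n := le_trans his hsn
    have hkey : n.choose s * s.choose i = n.choose i * (n - i).choose (s - i) :=
      Nat.choose_mul his
    have hni : (0 : ℚ) < (n.choose i : ℚ) := by exact_mod_cast Nat.choose_pos hin
    have hq : ((n.choose s : ℚ)) * (s.choose i : ℚ) = (n.choose i : ℚ) * ((n - i).choose (s - i) : ℚ) := by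
      exact_mod_cast congrArg (Nat.cast : ℕ → ℚ) hkey
    have hdiv : (s.choose i : ℚ) / (n.choose i) = ((n - i).choose (s - i) : ℚ) / (n.choose s) := by
      rw [div_eq_div_iff hni.ne' hns.ne']
      linarith [hq]
    calc (-1 : ℚ) ^ i * ((s.choose i : ℚ) * (t.choose i) / (n.choose i))
        = (-1 : ℚ) ^ i * (t.choose i : ℚ) * ((s.choose i : ℚ) / (n.choose i)) := by ring
      _ = (-1 : ℚ) ^ i * (t.choose i : ℚ) * (((n - i).choose (s - i) : ℚ) / (n.choose s)) := by rw [hdiv]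
      _ = (-1 : ℚ) ^ i * (t.choose i : ℚ) * ((n - i).choose (s - i) : ℚ) / (n.choose s) := by ring
  rw [Finset.sum_congr rfl hterm, ← Finset.sum_div]
  congr 1
  have := aux_sum s n t hsn ht
  exact_mod_cast congrArg (Int.cast : ℤ → ℚ) this
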